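/- Let F = A^{1/m} be an m-th root Finsler metric on an open subset U ⊆ ℝⁿ such that for every x ∈ U the polynomial y ↦ A(x,y) is irreducible in ℝ[y¹,…,yⁿ]. If F has isotropic S-curvature, i.e. S(x,y) = (n+1)c(x)F(x,y) for some smooth scalar function c on U, then S ≡ 0. -/

import Mathlib

open scoped BigOperators
open Matrix

noncomputable section

/-- Partial derivative of `f` in the `i`-th coordinate direction at `v`. -/
def pd {n : ℕ} (f : (Fin n → ℝ) → ℝ) (i : Fin n) (v : Fin n → ℝ) : ℝ :=
  fderiv ℝ f v (Pi.single i 1)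

/-- `A(x,y) = a_{i₁⋯i_m}(x) y^{i₁}⋯y^{i_m}`. -/
def Amap {n m : ℕ} (a : (Fin m → Fin n) → (Fin n → ℝ) → ℝ) (x y : Fin n → ℝ) : ℝ :=
  ∑ ι : Fin m → Fin n, a ι x * ∏ k, y (ι k)

/-- Fundamental tensor `g_{ij} = ½ ∂²(F²)/∂y^i∂y^j`. -/
def gmat {n : ℕ} (F : (Fin n → ℝ) → (Fin n → ℝ) → ℝ) (x y : Fin n → ℝ) :
    Matrix (Fin n) (Fin n) ℝ :=
  Matrix.of fun i j => (1/2) * pd (fun v => pd (fun w => (F x w)^2) j v) i y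

/-- Spray coefficients `G^i = ¼ g^{il}[∂²(F²)/∂x^k∂y^l · y^k − ∂(F²)/∂x^l]`. -/
def sprayCoef {n : ℕ} (F : (Fin n → ℝ) → (Fin n → ℝ) → ℝ) (i : Fin n)
    (x y : Fin n → ℝ) : ℝ :=
  (1/4) * ∑ l, (gmat F x y)⁻¹ i l *
    ((∑ k, pd (fun x' => pd (fun w => (F x' w)^2) l y) k x * y k)
      - pd (fun x' => (F x' y)^2) l x)

/-- S-curvature `S = ∂G^i/∂y^i − y^i ∂/∂x^i [ln √(det g)]`. -/
def Scurv {n : ℕ} (F : (Fin n → ℝ) → (Fin n → ℝ) → ℝ) (x y : Fin n → ℝ) : ℝ :=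
  (∑ i, pd (fun v => sprayCoef F i x v) i y)
    - ∑ i, y i * pd (fun x' => Real.log (Real.sqrt ((gmat F x' y).det))) i x

/-! ### Auxiliary lemmas -/

lemma pd_neg_fun {n : ℕ} (f : (Fin n → ℝ) → ℝ) (i : Fin n) (y : Fin n → ℝ) :
    pd (fun v => -(f v)) i y = - pd f i y := by
  unfold pd
  rw [fderiv_fun_neg]
  simp

lemma pd_comp_neg {n : ℕ} (f : (Fin n → ℝ) → ℝ) (i : Fin n) (y : Fin n → ℝ) :
    pd (fun w => f (-w)) i y = - pd f i (-y) := by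
  set e : (Fin n → ℝ) ≃L[ℝ] (Fin n → ℝ) := ContinuousLinearEquiv.neg ℝ with he
  have hfe : (fun w => f (-w)) = f ∘ e := by
    funext w; simp [he]
  unfold pd
  rw [hfe]
  by_cases h : DifferentiableAt ℝ f (-y)
  · have hde : DifferentiableAt ℝ (⇑e) y := e.differentiableAt
    have h' : DifferentiableAt ℝ f (e y) := by simpa [he] using h
    rw [fderiv_comp y h' hde, e.fderiv]
    simp [he]
  · have h1 : ¬ DifferentiableAt ℝ (f ∘ ⇑e) y := by
      intro hcontra
      exact h (by simpa [he] using (e.comp_right_differentiableAt_iff (f := f)).1 hcontra)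
    rw [fderiv_zero_of_not_differentiableAt h1, fderiv_zero_of_not_differentiableAt h]
    simp

lemma pd_even {n : ℕ} {f : (Fin n → ℝ) → ℝ} (hf : ∀ w, f (-w) = f w)
    (i : Fin n) (y : Fin n → ℝ) : pd f i (-y) = - pd f i y := by
  have h := pd_comp_neg f i y
  have : (fun w => f (-w)) = f := funext hf
  rw [this] at h
  linarith

lemma pd_odd {n : ℕ} {f : (Fin n → ℝ) → ℝ} (hf : ∀ w, f (-w) = - f w)
    (i : Fin n) (y : Fin n → ℝ) : pd f i (-y) = pd f i y := by
  have h := pd_comp_neg f i y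
  have h2 : (fun w => f (-w)) = (fun w => -(f w)) := funext hf
  rw [h2, pd_neg_fun] at h
  linarith

lemma amap_neg {n m : ℕ} (a : (Fin m → Fin n) → (Fin n → ℝ) → ℝ)
    (x y : Fin n → ℝ) : Amap a x (-y) = (-1 : ℝ)^m * Amap a x y := by
  unfold Amap
  rw [Finset.mul_sum]
  refine Finset.sum_congr rfl fun ι _ => ?_
  have : ∏ k, (-y) (ι k) = (-1 : ℝ)^m * ∏ k, y (ι k) := by
    calc ∏ k, (-y) (ι k) = ∏ k : Fin m, (-1 : ℝ) * y (ι k) := by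
          refine Finset.prod_congr rfl fun k _ => ?_; simp
      _ = (∏ _k : Fin m, (-1 : ℝ)) * ∏ k, y (ι k) := Finset.prod_mul_distrib
      _ = (-1 : ℝ)^m * ∏ k, y (ι k) := by simp
  rw [this]; ring

section EvenF

variable {n : ℕ} {F : (Fin n → ℝ) → (Fin n → ℝ) → ℝ}
  (hFe : ∀ x y, F x (-y) = F x y)

include hFe

lemma gmat_neg (x y : Fin n → ℝ) : gmat F x (-y) = gmat F x y := by
  ext i j
  unfold gmat
  simp only [Matrix.of_apply]
  congr 1
  refine pd_odd (fun v => ?_) i y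
  refine pd_even (fun w => ?_) j v
  rw [hFe]

lemma spray_neg (i : Fin n) (x y : Fin n → ℝ) :
    sprayCoef F i x (-y) = sprayCoef F i x y := by
  unfold sprayCoef
  rw [gmat_neg hFe]
  congr 1
  refine Finset.sum_congr rfl fun l _ => ?_
  congr 1
  congr 1
  · refine Finset.sum_congr rfl fun k _ => ?_
    have h1 : (fun x' => pd (fun w => (F x' w)^2) l (-y))
        = (fun x' => -(pd (fun w => (F x' w)^2) l y)) := by
      funext x'
      exact pd_even (fun w => by rw [hFe]) l y
    rw [h1, pd_neg_fun]
    simp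
  · congr 1
    funext x'
    rw [hFe]

lemma scurv_neg (x y : Fin n → ℝ) : Scurv F x (-y) = - Scurv F x y := by
  unfold Scurv
  have h1 : ∀ i : Fin n, pd (fun v => sprayCoef F i x v) i (-y)
      = - pd (fun v => sprayCoef F i x v) i y := by
    intro i
    exact pd_even (fun v => spray_neg hFe i x v) i y
  have h2 : ∀ x' : Fin n → ℝ, gmat F x' (-y) = gmat F x' y :=
    fun x' => gmat_neg hFe x' y
  have h3 : (∑ i, pd (fun v => sprayCoef F i x v) i (-y))
      = - ∑ i, pd (fun v => sprayCoef F i x v) i y := by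
    rw [← Finset.sum_neg_distrib]
    exact Finset.sum_congr rfl fun i _ => h1 i
  have h4 : (∑ i, (-y) i * pd (fun x' => Real.log (Real.sqrt ((gmat F x' (-y)).det))) i x)
      = - ∑ i, y i * pd (fun x' => Real.log (Real.sqrt ((gmat F x' y).det))) i x := by
    rw [← Finset.sum_neg_distrib]
    refine Finset.sum_congr rfl fun i _ => ?_
    have : (fun x' => Real.log (Real.sqrt ((gmat F x' (-y)).det)))
        = (fun x' => Real.log (Real.sqrt ((gmat F x' y).det))) := by
      funext x'; rw [h2 x']
    rw [this]
    simp
  rw [h3, h4]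
  ring

end EvenF

/-- an m-th root metric with isotropic S-curvature `S = (n+1)cF`
has vanishing S-curvature. -/
theorem mth_root_isotropic_S_curvature
    (n m : ℕ) (hn : 2 ≤ n) (hm : 3 ≤ m)
    (U : Set (Fin n → ℝ)) (hU : IsOpen U)
    (a : (Fin m → Fin n) → (Fin n → ℝ) → ℝ)
    (ha_smooth : ∀ ι, ContDiff ℝ (⊤:ℕ∞) (a ι))
    (ha_symm : ∀ (σ : Equiv.Perm (Fin m)) (ι : Fin m → Fin n) (x : Fin n → ℝ),
      a (ι ∘ σ) x = a ι x)
    (hApos : ∀ x ∈ U, ∀ y : Fin n → ℝ, y ≠ 0 → 0 < Amap a x y)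
    (F : (Fin n → ℝ) → (Fin n → ℝ) → ℝ)
    (hF : ∀ x y, F x y = (Amap a x y) ^ ((1:ℝ)/m))
    (hgpd : ∀ x ∈ U, ∀ y : Fin n → ℝ, y ≠ 0 → (gmat F x y).PosDef)
    (hirr : ∀ x ∈ U, ∃ P : MvPolynomial (Fin n) ℝ, Irreducible P ∧
      ∀ y : Fin n → ℝ, MvPolynomial.eval y P = Amap a x y)
    (c : (Fin n → ℝ) → ℝ) (hc : ContDiffOn ℝ (⊤:ℕ∞) c U)
    (hS : ∀ x ∈ U, ∀ y : Fin n → ℝ, y ≠ 0 →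
      Scurv F x y = (n + 1 : ℝ) * c x * F x y) :
    ∀ x ∈ U, ∀ y : Fin n → ℝ, y ≠ 0 → Scurv F x y = 0 := by
  intro x hx y hy
  rcases Nat.even_or_odd m with hme | hmo
  · -- m even : F is even in y, so Scurv is odd in y while (n+1)cF is even.
    have hFe : ∀ x' y' : Fin n → ℝ, F x' (-y') = F x' y' := by
      intro x' y'
      rw [hF, hF, amap_neg, hme.neg_one_pow, one_mul]
    have hy' : (-y : Fin n → ℝ) ≠ 0 := neg_ne_zero.mpr hy
    have h1 := hS x hx y hy
    have h2 := hS x hx (-y) hy'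
    rw [scurv_neg hFe, hFe] at h2
    linarith
  · -- m odd : contradiction with positivity of A.
    exfalso
    have h1 := hApos x hx y hy
    have h2 := hApos x hx (-y) (neg_ne_zero.mpr hy)
    rw [amap_neg, hmo.neg_one_pow] at h2
    linarith
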